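/- arXiv:2010.10199 — 4 statements merged into one kernel-verified Lean document; each statement's English description precedes it below -/
import Mathlib

section
/- Let I be a finite index set, ω : I → [0,∞) a weight function, y ∈ ℂ^I, and ξ > 0. Define x₂*(ξ) ∈ ℂ^I by (x₂*(ξ))_k = y_k / (1 + 2ξω(k)) and set λ := ‖( y_k / (1/(2ξ) + ω(k)) )_{k∈I}‖_W. Then x₂*(ξ) is a minimizer of the function x ↦ (1/2)‖x − y‖₂² + λ‖x‖_W over ℂ^I. -/
/-- For a finite index set with nonnegative weights `ω`, data `y` and `ξ > 0`,
the vector `x₂*(ξ)` with entries `y_k / (1 + 2ξω(k))` minimizes the functional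
`x ↦ (1/2)‖x-y‖₂² + λ‖x‖_W` for the specific regularization parameter
`λ = ‖( y_k / (1/(2ξ) + ω(k)) )_k‖_W`. -/
theorem weighted_soft_threshold_minimizer {ι : Type*} [Fintype ι]
    (ω : ι → ℝ) (hω : ∀ k, 0 ≤ ω k) (y : ι → ℂ) (ξ : ℝ) (hξ : 0 < ξ) :
    ∀ x : ι → ℂ,
      (1 / 2) * ∑ k, ‖(fun k => y k / ((1 + 2 * ξ * ω k : ℝ) : ℂ)) k - y k‖ ^ 2
          + Real.sqrt (∑ k, ω k * ‖y k / ((1 / (2 * ξ) + ω k : ℝ) : ℂ)‖ ^ 2)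
            * Real.sqrt (∑ k, ω k *
                ‖(fun k => y k / ((1 + 2 * ξ * ω k : ℝ) : ℂ)) k‖ ^ 2)
        ≤ (1 / 2) * ∑ k, ‖x k - y k‖ ^ 2
          + Real.sqrt (∑ k, ω k * ‖y k / ((1 / (2 * ξ) + ω k : ℝ) : ℂ)‖ ^ 2)
            * Real.sqrt (∑ k, ω k * ‖x k‖ ^ 2) := by
  intro x
  have h2ξ : (0:ℝ) < 2 * ξ := by linarith
  set a : ι → ℝ := fun k => 1 + 2 * ξ * ω k with ha
  have hapos : ∀ k, 0 < a k := fun k => by have := hω k; simp only [ha]; nlinarith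
  set xs : ι → ℂ := fun k => y k / ((a k : ℝ) : ℂ) with hxs
  -- the k-th entry of the λ-vector has abs = 2ξ * abs (xs k)
  have h1 : ∀ k, ‖y k / ((1 / (2 * ξ) + ω k : ℝ) : ℂ)‖ ^ 2
      = (2*ξ)^2 * ‖xs k‖ ^ 2 := by
    intro k
    have hr : (1 / (2 * ξ) + ω k : ℝ) = a k / (2*ξ) := by
      field_simp [ha]; ring
    have hxsk : ‖xs k‖ = ‖y k‖ / a k := by
      simp only [hxs, norm_div, Complex.norm_real, Real.norm_eq_abs, abs_of_pos (hapos k)]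
    rw [hr, norm_div, Complex.norm_real, Real.norm_eq_abs, abs_of_pos (div_pos (hapos k) h2ξ), hxsk]
    field_simp
  -- abbreviations
  set A : ℝ := ∑ k, ω k * ‖xs k‖ ^ 2 with hA
  set B : ℝ := ∑ k, ω k * ‖x k‖ ^ 2 with hB
  have hAnn : 0 ≤ A := Finset.sum_nonneg fun k _ => mul_nonneg (hω k) (by positivity)
  have hBnn : 0 ≤ B := Finset.sum_nonneg fun k _ => mul_nonneg (hω k) (by positivity)
  set N : ℝ := Real.sqrt A with hN
  set M : ℝ := Real.sqrt B with hM
  have hNN : N * N = A := Real.mul_self_sqrt hAnn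
  -- λ = 2ξ N
  have hlam : Real.sqrt (∑ k, ω k * ‖y k / ((1 / (2 * ξ) + ω k : ℝ) : ℂ)‖ ^ 2)
      = 2*ξ*N := by
    have : (∑ k, ω k * ‖y k / ((1 / (2 * ξ) + ω k : ℝ) : ℂ)‖ ^ 2)
        = (2*ξ)^2 * A := by
      rw [hA, Finset.mul_sum]
      exact Finset.sum_congr rfl fun k _ => by rw [h1 k]; ring
    rw [this, Real.sqrt_mul (by positivity), Real.sqrt_sq (le_of_lt h2ξ), hN]
  -- y k = a k * xs k
  have hy : ∀ k, y k = ((a k : ℝ) : ℂ) * xs k := by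
    intro k
    have : ((a k : ℝ) : ℂ) ≠ 0 := by
      exact_mod_cast ne_of_gt (hapos k)
    simp only [hxs]; field_simp
  -- xs k - y k = -(2ξω k) * xs k
  have hxy : ∀ k, xs k - y k = ((-(2*ξ*ω k) : ℝ) : ℂ) * xs k := by
    intro k
    rw [hy k]
    push_cast [ha]
    ring
  have habs1 : ∀ k, ‖xs k - y k‖ ^ 2 = (2*ξ*ω k)^2 * ‖xs k‖ ^ 2 := by
    intro k
    rw [hxy k, norm_mul, Complex.norm_real, Real.norm_eq_abs, mul_pow, sq_abs]
    ring
  -- expansion of |x k - y k|^2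
  have hexp : ∀ k, ‖x k - y k‖ ^ 2
      = ‖x k - xs k‖ ^ 2 + (2*ξ*ω k)^2 * ‖xs k‖ ^ 2
        + 4*ξ*ω k * (Complex.normSq (xs k) - (x k * (starRingEnd ℂ) (xs k)).re) := by
    intro k
    have : x k - y k = (x k - xs k) + ((-(2*ξ*ω k) : ℝ) : ℂ) * xs k := by
      rw [← hxy k]; ring
    rw [this, Complex.sq_norm, Complex.normSq_add, Complex.sq_norm, Complex.sq_norm,
      Complex.normSq_mul, Complex.normSq_ofReal, map_mul, Complex.conj_ofReal]
    have hre : ((x k - xs k) * (((-(2*ξ*ω k) : ℝ) : ℂ) * (starRingEnd ℂ) (xs k))).re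
        = (-(2*ξ*ω k)) * ((x k - xs k) * (starRingEnd ℂ) (xs k)).re := by
      rw [show (x k - xs k) * (((-(2*ξ*ω k) : ℝ) : ℂ) * (starRingEnd ℂ) (xs k))
          = ((-(2*ξ*ω k) : ℝ) : ℂ) * ((x k - xs k) * (starRingEnd ℂ) (xs k)) by ring,
        Complex.re_ofReal_mul]
    rw [hre, sub_mul, Complex.sub_re, Complex.mul_conj, Complex.ofReal_re]
    ring
  -- Cauchy-Schwarz
  have hCS : ∑ k, ω k * (x k * (starRingEnd ℂ) (xs k)).re ≤ M * N := by
    have step1 : ∑ k, ω k * (x k * (starRingEnd ℂ) (xs k)).re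
        ≤ ∑ k, (Real.sqrt (ω k) * ‖x k‖) * (Real.sqrt (ω k) * ‖xs k‖) := by
      apply Finset.sum_le_sum
      intro k _
      have h1' : (x k * (starRingEnd ℂ) (xs k)).re ≤ ‖x k‖ * ‖xs k‖ := by
        calc (x k * (starRingEnd ℂ) (xs k)).re ≤ ‖x k * (starRingEnd ℂ) (xs k)‖ :=
              Complex.re_le_norm _
          _ = ‖x k‖ * ‖xs k‖ := by
              rw [norm_mul, Complex.norm_conj]
      calc ω k * (x k * (starRingEnd ℂ) (xs k)).re
          ≤ ω k * (‖x k‖ * ‖xs k‖) :=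
            mul_le_mul_of_nonneg_left h1' (hω k)
        _ = (Real.sqrt (ω k) * ‖x k‖) * (Real.sqrt (ω k) * ‖xs k‖) := by
            rw [show (Real.sqrt (ω k) * ‖x k‖) * (Real.sqrt (ω k) * ‖xs k‖)
              = (Real.sqrt (ω k) * Real.sqrt (ω k)) * (‖x k‖ * ‖xs k‖) by ring,
              Real.mul_self_sqrt (hω k)]
    have step2 : ∑ k, (Real.sqrt (ω k) * ‖x k‖) * (Real.sqrt (ω k) * ‖xs k‖)
        ≤ Real.sqrt (∑ k, (Real.sqrt (ω k) * ‖x k‖)^2)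
          * Real.sqrt (∑ k, (Real.sqrt (ω k) * ‖xs k‖)^2) :=
      Real.sum_mul_le_sqrt_mul_sqrt Finset.univ _ _
    have e1 : ∑ k, (Real.sqrt (ω k) * ‖x k‖)^2 = B := by
      rw [hB]
      exact Finset.sum_congr rfl fun k _ => by
        rw [mul_pow, Real.sq_sqrt (hω k)]
    have e2 : ∑ k, (Real.sqrt (ω k) * ‖xs k‖)^2 = A := by
      rw [hA]
      exact Finset.sum_congr rfl fun k _ => by
        rw [mul_pow, Real.sq_sqrt (hω k)]
    calc ∑ k, ω k * (x k * (starRingEnd ℂ) (xs k)).re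
        ≤ _ := step1
      _ ≤ _ := step2
      _ = M * N := by rw [e1, e2, hM, hN]
  -- assemble
  simp only [hlam]
  have hLHS1 : ∑ k, ‖(fun k => y k / ((1 + 2 * ξ * ω k : ℝ) : ℂ)) k - y k‖ ^ 2
      = ∑ k, (2*ξ*ω k)^2 * ‖xs k‖ ^ 2 :=
    Finset.sum_congr rfl fun k _ => habs1 k
  rw [hLHS1]
  have hRHS : ∑ k, ‖x k - y k‖ ^ 2
      = ∑ k, ‖x k - xs k‖ ^ 2 + ∑ k, (2*ξ*ω k)^2 * ‖xs k‖ ^ 2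
        + 4*ξ*(∑ k, ω k * Complex.normSq (xs k) - ∑ k, ω k * (x k * (starRingEnd ℂ) (xs k)).re) := by
    rw [← Finset.sum_sub_distrib, Finset.mul_sum, ← Finset.sum_add_distrib,
      ← Finset.sum_add_distrib]
    exact Finset.sum_congr rfl fun k _ => by rw [hexp k]; ring
  rw [hRHS]
  have hAeq : ∑ k, ω k * Complex.normSq (xs k) = A := by
    rw [hA]
    exact Finset.sum_congr rfl fun k _ => by rw [Complex.sq_norm]
  rw [hAeq]
  have hsq : 0 ≤ ∑ k, ‖x k - xs k‖ ^ 2 :=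
    Finset.sum_nonneg fun k _ => by positivity
  nlinarith [mul_le_mul_of_nonneg_left hCS (le_of_lt h2ξ), hNN]
end

section
/- Let I be a finite index set, ω : I → (0,∞) a strictly positive weight function, and y ∈ ℂ^I. If λ ≥ ‖( y_k / ω(k) )_{k∈I}‖_W, then the zero vector 0 ∈ ℂ^I is a minimizer of the function x ↦ (1/2)‖x − y‖₂² + λ‖x‖_W over ℂ^I. -/
lemma per_term (a b : ℂ) :
    ‖b‖ ^ 2 - ‖a - b‖ ^ 2 ≤ 2 * (‖a‖ * ‖b‖) := by
  have h1 : ‖b‖ ≤ ‖a - b‖ + ‖a‖ := by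
    calc ‖b‖ = ‖(b - a) + a‖ := by ring_nf
    _ ≤ ‖b - a‖ + ‖a‖ := norm_add_le _ _
    _ = ‖a - b‖ + ‖a‖ := by rw [norm_sub_rev]
  have h2 : (0:ℝ) ≤ ‖a - b‖ := norm_nonneg _
  have h3 : (0:ℝ) ≤ ‖a‖ := norm_nonneg _
  have h4 : (0:ℝ) ≤ ‖b‖ := norm_nonneg _
  nlinarith [sq_nonneg (‖a-b‖ - ‖b‖)]

/-- For a finite index set with strictly positive weights `ω` and data `y`, if
`λ ≥ ‖( y_k / ω(k) )_k‖_W`, then the zero vector minimizes the functional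
`x ↦ (1/2)‖x-y‖₂² + λ‖x‖_W`. -/
theorem weighted_soft_threshold_zero_minimizer {ι : Type*} [Fintype ι]
    (ω : ι → ℝ) (hω : ∀ k, 0 < ω k) (y : ι → ℂ) (lam : ℝ)
    (hlam : Real.sqrt (∑ k, ω k * ‖y k / ((ω k : ℝ) : ℂ)‖ ^ 2) ≤ lam) :
    ∀ x : ι → ℂ,
      (1 / 2) * ∑ k, ‖(0 : ι → ℂ) k - y k‖ ^ 2
          + lam * Real.sqrt (∑ k, ω k * ‖(0 : ι → ℂ) k‖ ^ 2)
        ≤ (1 / 2) * ∑ k, ‖x k - y k‖ ^ 2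
          + lam * Real.sqrt (∑ k, ω k * ‖x k‖ ^ 2) := by
  intro x
  simp only [Pi.zero_apply, zero_sub, norm_neg, norm_zero]
  rw [show (∑ k : ι, ω k * (0:ℝ) ^ 2) = (0:ℝ) from by simp, Real.sqrt_zero, mul_zero,
    add_zero]
  -- set notation
  set A := Real.sqrt (∑ k, ω k * ‖x k‖ ^ 2) with hA
  set B := Real.sqrt (∑ k, ω k * ‖y k / ((ω k : ℝ) : ℂ)‖ ^ 2) with hB
  clear_value A B
  have hB_eq : B = Real.sqrt (∑ k, ‖y k‖ ^ 2 / ω k) := by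
    rw [hB]
    congr 1
    apply Finset.sum_congr rfl
    intro k _
    rw [norm_div, Complex.norm_real, Real.norm_eq_abs, abs_of_pos (hω k)]
    field_simp [(hω k).ne']
  have hA0 : 0 ≤ A := hA ▸ Real.sqrt_nonneg _
  have hB0 : 0 ≤ B := hB ▸ Real.sqrt_nonneg _
  have hlam0 : 0 ≤ lam := le_trans hB0 hlam
  -- Cauchy–Schwarz step
  have hCS : ∑ k, ‖x k‖ * ‖y k‖ ≤ A * B := by
    have key : (∑ k, (Real.sqrt (ω k) * ‖x k‖) *
        (‖y k‖ / Real.sqrt (ω k))) ^ 2 ≤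
        (∑ k, (Real.sqrt (ω k) * ‖x k‖) ^ 2) *
        (∑ k, (‖y k‖ / Real.sqrt (ω k)) ^ 2) :=
      Finset.sum_mul_sq_le_sq_mul_sq _ _ _
    have hsum_eq : (∑ k, (Real.sqrt (ω k) * ‖x k‖) *
        (‖y k‖ / Real.sqrt (ω k))) =
        ∑ k, ‖x k‖ * ‖y k‖ := by
      apply Finset.sum_congr rfl
      intro k _
      have hk : Real.sqrt (ω k) ≠ 0 := Real.sqrt_ne_zero'.mpr (hω k)
      field_simp [hk]
    have h1 : (∑ k, (Real.sqrt (ω k) * ‖x k‖) ^ 2) =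
        ∑ k, ω k * ‖x k‖ ^ 2 := by
      apply Finset.sum_congr rfl
      intro k _
      rw [mul_pow, Real.sq_sqrt (hω k).le]
    have h2 : (∑ k, (‖y k‖ / Real.sqrt (ω k)) ^ 2) =
        ∑ k, ‖y k‖ ^ 2 / ω k := by
      apply Finset.sum_congr rfl
      intro k _
      rw [div_pow, Real.sq_sqrt (hω k).le]
    rw [hsum_eq, h1, h2] at key
    have hsx : 0 ≤ ∑ k, ‖x k‖ * ‖y k‖ :=
      Finset.sum_nonneg fun k _ => mul_nonneg (norm_nonneg _) (norm_nonneg _)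
    have : (∑ k, ‖x k‖ * ‖y k‖) ^ 2 ≤ (A * B) ^ 2 := by
      rw [hA, hB_eq, mul_pow, Real.sq_sqrt (Finset.sum_nonneg fun k _ =>
        mul_nonneg (hω k).le (sq_nonneg _)), Real.sq_sqrt (Finset.sum_nonneg fun k _ =>
        div_nonneg (sq_nonneg _) (hω k).le)]
      exact key
    calc (∑ k, ‖x k‖ * ‖y k‖)
        = Real.sqrt ((∑ k, ‖x k‖ * ‖y k‖) ^ 2) :=
          (Real.sqrt_sq hsx).symm
      _ ≤ Real.sqrt ((A * B) ^ 2) := Real.sqrt_le_sqrt this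
      _ = A * B := Real.sqrt_sq (by positivity)
  -- sum of per-term inequalities
  have hsum : ∑ k, ‖y k‖ ^ 2 - ∑ k, ‖x k - y k‖ ^ 2 ≤
      2 * ∑ k, ‖x k‖ * ‖y k‖ := by
    rw [← Finset.sum_sub_distrib, Finset.mul_sum]
    apply Finset.sum_le_sum
    intro k _
    have := per_term (x k) (y k)
    linarith
  have hAB : A * B ≤ lam * A := by
    calc A * B ≤ A * lam := by
          apply mul_le_mul_of_nonneg_left hlam hA0
    _ = lam * A := mul_comm _ _
  nlinarith [hCS, hsum, hAB]
end

section
/- Let U be a finite set and for each u ∈ U let I_u be a finite index set, the I_u pairwise disjoint, with strictly positive weights ω : ⋃_{u∈U} I_u → (0,∞). Let y ∈ ℂ^I with I = ⋃_{u∈U} I_u and λ > 0. Define x* ∈ ℂ^I blockwise as follows: for u ∈ U with λ ≤ ‖( y_k / ω(k) )_{k∈I_u}‖_{W(u)}, choose ξ(u) > 0 satisfying ‖( y_k / (1/ξ(u) + ω(k)) )_{k∈I_u}‖_{W(u)} = λ and set (x*)_k = y_k / (1 + ξ(u)ω(k)) for k ∈ I_u; for u ∈ U with λ > ‖( y_k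 / ω(k) )_{k∈I_u}‖_{W(u)}, set (x*)_k = 0 for k ∈ I_u. Then x* is a minimizer of x ↦ (1/2)‖x − y‖₂² + λ Σ_{u∈U} ‖x_u‖_{W(u)} over ℂ^I. -/
open Finset

/-- Weighted Cauchy–Schwarz for the real parts of complex products. -/
lemma gl_cauchy_schwarz {κ : Type*} (s : Finset κ) (ω : κ → ℝ)
    (hω : ∀ k ∈ s, 0 ≤ ω k) (a b : κ → ℂ) :
    ∑ k ∈ s, ω k * ((starRingEnd ℂ) (a k) * b k).re
      ≤ Real.sqrt (∑ k ∈ s, ω k * ‖a k‖ ^ 2) *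
        Real.sqrt (∑ k ∈ s, ω k * ‖b k‖ ^ 2) := by
  have h1 : ∑ k ∈ s, ω k * ((starRingEnd ℂ) (a k) * b k).re
      ≤ ∑ k ∈ s, (Real.sqrt (ω k) * ‖a k‖) *
        (Real.sqrt (ω k) * ‖b k‖) := by
    apply Finset.sum_le_sum
    intro k hk
    have hre : ((starRingEnd ℂ) (a k) * b k).re ≤ ‖a k‖ * ‖b k‖ := by
      calc ((starRingEnd ℂ) (a k) * b k).re ≤ ‖(starRingEnd ℂ) (a k) * b k‖ :=
            Complex.re_le_norm _
        _ = ‖a k‖ * ‖b k‖ := by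
            rw [norm_mul, Complex.norm_conj]
    calc ω k * ((starRingEnd ℂ) (a k) * b k).re
        ≤ ω k * (‖a k‖ * ‖b k‖) :=
          mul_le_mul_of_nonneg_left hre (hω k hk)
      _ = (Real.sqrt (ω k) * ‖a k‖) * (Real.sqrt (ω k) * ‖b k‖) := by
          rw [mul_mul_mul_comm, Real.mul_self_sqrt (hω k hk)]
  refine h1.trans ?_
  have h2 := Finset.sum_mul_sq_le_sq_mul_sq s (fun k => Real.sqrt (ω k) * ‖a k‖)
    (fun k => Real.sqrt (ω k) * ‖b k‖)
  have hnn : 0 ≤ ∑ k ∈ s, (Real.sqrt (ω k) * ‖a k‖) *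
      (Real.sqrt (ω k) * ‖b k‖) := by
    apply Finset.sum_nonneg
    intro k hk
    positivity
  have hA : ∀ k ∈ s, (Real.sqrt (ω k) * ‖a k‖) ^ 2 = ω k * ‖a k‖ ^ 2 := by
    intro k hk; rw [mul_pow, Real.sq_sqrt (hω k hk)]
  have hB : ∀ k ∈ s, (Real.sqrt (ω k) * ‖b k‖) ^ 2 = ω k * ‖b k‖ ^ 2 := by
    intro k hk; rw [mul_pow, Real.sq_sqrt (hω k hk)]
  rw [Finset.sum_congr rfl hA, Finset.sum_congr rfl hB] at h2
  calc ∑ k ∈ s, (Real.sqrt (ω k) * ‖a k‖) * (Real.sqrt (ω k) * ‖b k‖)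
      = Real.sqrt ((∑ k ∈ s, (Real.sqrt (ω k) * ‖a k‖) *
          (Real.sqrt (ω k) * ‖b k‖)) ^ 2) := by rw [Real.sqrt_sq hnn]
    _ ≤ Real.sqrt ((∑ k ∈ s, ω k * ‖a k‖ ^ 2) *
          ∑ k ∈ s, ω k * ‖b k‖ ^ 2) := Real.sqrt_le_sqrt h2
    _ = _ := Real.sqrt_mul (Finset.sum_nonneg fun k hk =>
          mul_nonneg (hω k hk) (sq_nonneg _)) _

lemma gl_re_swap (z w : ℂ) : (z * (starRingEnd ℂ) w).re = ((starRingEnd ℂ) z * w).re := by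
  rw [← Complex.conj_re (z * (starRingEnd ℂ) w), map_mul]
  simp

/-- Explicit blockwise solution of the group lasso problem: with pairwise
disjoint groups `I_u` covering the index set, strictly positive weights `ω` and
`λ > 0`, define `x*` blockwise by `x*_k = y_k / (1 + ξ(u)ω(k))` on active groups
(those with `λ ≤ ‖(y_k/ω(k))_{k∈I_u}‖_{W(u)}`), where `ξ(u) > 0` solves
`‖( y_k / (1/ξ(u) + ω(k)) )_{k∈I_u}‖_{W(u)} = λ`, and by `x*_k = 0` on inactive
groups. Then `x*` minimizes the group lasso functional
`x ↦ (1/2)‖x - y‖₂² + λ Σ_{u∈U} ‖x_u‖_{W(u)}`. -/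
theorem groupLasso_explicit_minimizer {U : Type*} {κ : Type*} [Fintype U]
    [Fintype κ] [DecidableEq κ]
    (I : U → Finset κ)
    (hdisj : ∀ u v : U, u ≠ v → Disjoint (I u) (I v))
    (hcover : ∀ k : κ, ∃ u : U, k ∈ I u)
    (ω : κ → ℝ) (hω : ∀ k, 0 < ω k)
    (y : κ → ℂ) (lam : ℝ) (hlam : 0 < lam)
    (ξ : U → ℝ) (xstar : κ → ℂ)
    (hactive : ∀ u : U,
      lam ≤ Real.sqrt (∑ k ∈ I u, ω k * ‖y k / ((ω k : ℝ) : ℂ)‖ ^ 2) →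
        0 < ξ u
        ∧ Real.sqrt (∑ k ∈ I u, ω k *
            ‖y k / ((1 / ξ u + ω k : ℝ) : ℂ)‖ ^ 2) = lam
        ∧ ∀ k ∈ I u, xstar k = y k / ((1 + ξ u * ω k : ℝ) : ℂ))
    (hinactive : ∀ u : U,
      Real.sqrt (∑ k ∈ I u, ω k * ‖y k / ((ω k : ℝ) : ℂ)‖ ^ 2) < lam →
        ∀ k ∈ I u, xstar k = 0) :
    ∀ x : κ → ℂ,
      (1 / 2) * ∑ k, ‖xstar k - y k‖ ^ 2
          + lam * ∑ u : U, Real.sqrt (∑ k ∈ I u, ω k * ‖xstar k‖ ^ 2)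
        ≤ (1 / 2) * ∑ k, ‖x k - y k‖ ^ 2
          + lam * ∑ u : U, Real.sqrt (∑ k ∈ I u, ω k * ‖x k‖ ^ 2) := by
  intro x
  -- partition of the full sum over κ into blocks
  have hpart : ∀ f : κ → ℝ, ∑ k, f k = ∑ u : U, ∑ k ∈ I u, f k := by
    intro f
    have huniv : (Finset.univ : Finset κ) = Finset.univ.biUnion I := by
      ext k
      simpa using hcover k
    rw [show ∑ k, f k = ∑ k ∈ Finset.univ.biUnion I, f k from by rw [← huniv]]
    exact Finset.sum_biUnion fun u _ v _ huv => hdisj u v huv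
  -- key blockwise subgradient inequality
  have key : ∀ u : U,
      lam * Real.sqrt (∑ k ∈ I u, ω k * ‖xstar k‖ ^ 2)
        + ∑ k ∈ I u, ((starRingEnd ℂ) (y k - xstar k) * (x k - xstar k)).re
      ≤ lam * Real.sqrt (∑ k ∈ I u, ω k * ‖x k‖ ^ 2) := by
    intro u
    rcases le_or_gt lam
        (Real.sqrt (∑ k ∈ I u, ω k * ‖y k / ((ω k : ℝ) : ℂ)‖ ^ 2)) with hle | hlt
    · -- active block
      obtain ⟨hξ, hnorm, hx⟩ := hactive u hle
      have hden : ∀ k, (0:ℝ) < 1 + ξ u * ω k := by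
        intro k
        have := mul_pos hξ (hω k)
        linarith
      have hdenC : ∀ k, ((1 + ξ u * ω k : ℝ) : ℂ) ≠ 0 := fun k =>
        Complex.ofReal_ne_zero.mpr (ne_of_gt (hden k))
      -- y k - xstar k = ξ u * ω k * xstar k on the block
      have hg : ∀ k ∈ I u, y k - xstar k = ((ξ u * ω k : ℝ) : ℂ) * xstar k := by
        intro k hk
        rw [hx k hk]
        have h0 : (1 + (ξ u : ℂ) * (ω k : ℂ)) ≠ 0 := by
          have := hdenC k
          push_cast at this
          exact this
        push_cast
        field_simp
        ring
      -- ξ u * ‖xstar‖_W = lam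
      set S : ℝ := ∑ k ∈ I u, ω k * ‖xstar k‖ ^ 2 with hS
      have hSnn : 0 ≤ S := Finset.sum_nonneg fun k _ => mul_nonneg (hω k).le (sq_nonneg _)
      have hxi : ξ u * Real.sqrt S = lam := by
        have heq : ∀ k ∈ I u,
            ω k * ‖y k / ((1 / ξ u + ω k : ℝ) : ℂ)‖ ^ 2
              = ξ u ^ 2 * (ω k * ‖xstar k‖ ^ 2) := by
          intro k hk
          have hξ0 : (ξ u : ℝ) ≠ 0 := ne_of_gt hξ
          have h2 : ((1 / ξ u + ω k : ℝ) : ℂ) ≠ 0 := by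
            refine Complex.ofReal_ne_zero.mpr (ne_of_gt ?_)
            have := hω k
            positivity
          have hξC : (ξ u : ℂ) ≠ 0 := Complex.ofReal_ne_zero.mpr hξ0
          have h1 : y k / ((1 / ξ u + ω k : ℝ) : ℂ)
              = ((ξ u : ℝ) : ℂ) * (y k / ((1 + ξ u * ω k : ℝ) : ℂ)) := by
            rw [mul_div_assoc', div_eq_div_iff h2 (hdenC k)]
            push_cast
            field_simp
          rw [h1, ← hx k hk, norm_mul, mul_pow, Complex.norm_real, Real.norm_eq_abs, abs_of_pos hξ]
          ring
        rw [Finset.sum_congr rfl heq, ← Finset.mul_sum] at hnorm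
        rw [← hnorm, Real.sqrt_mul (sq_nonneg _), Real.sqrt_sq hξ.le]
      have hxs : Real.sqrt S ^ 2 = S := Real.sq_sqrt hSnn
      -- rewrite the inner product term
      have hip : ∑ k ∈ I u, ((starRingEnd ℂ) (y k - xstar k) * (x k - xstar k)).re
          = ξ u * ∑ k ∈ I u, ω k * ((starRingEnd ℂ) (xstar k) * (x k)).re
            - ξ u * S := by
        rw [hS, Finset.mul_sum, Finset.mul_sum, ← Finset.sum_sub_distrib]
        apply Finset.sum_congr rfl
        intro k hk
        rw [hg k hk]
        have hc : (starRingEnd ℂ) (((ξ u * ω k : ℝ) : ℂ) * xstar k)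
            = ((ξ u * ω k : ℝ) : ℂ) * (starRingEnd ℂ) (xstar k) := by
          rw [map_mul, Complex.conj_ofReal]
        have habs : ((starRingEnd ℂ) (xstar k) * xstar k).re = ‖xstar k‖ ^ 2 := by
          rw [mul_comm, Complex.mul_conj, Complex.ofReal_re, ← Complex.sq_norm]
        rw [hc]
        simp only [mul_assoc, Complex.re_ofReal_mul, mul_sub, Complex.sub_re]
        rw [habs]
      rw [hip]
      have hcs := gl_cauchy_schwarz (I u) ω (fun k _ => (hω k).le) xstar x
      have hξS : ξ u * S = lam * Real.sqrt S := by
        calc ξ u * S = (ξ u * Real.sqrt S) * Real.sqrt S := by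
              rw [mul_assoc, Real.mul_self_sqrt hSnn]
          _ = lam * Real.sqrt S := by rw [hxi]
      calc lam * Real.sqrt S + (ξ u * ∑ k ∈ I u, ω k * ((starRingEnd ℂ) (xstar k) * x k).re
            - ξ u * S)
          = ξ u * ∑ k ∈ I u, ω k * ((starRingEnd ℂ) (xstar k) * x k).re := by
            rw [hξS]; ring
        _ ≤ ξ u * (Real.sqrt S * Real.sqrt (∑ k ∈ I u, ω k * ‖x k‖ ^ 2)) :=
            mul_le_mul_of_nonneg_left hcs hξ.le
        _ = lam * Real.sqrt (∑ k ∈ I u, ω k * ‖x k‖ ^ 2) := by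
            rw [← mul_assoc, hxi]
    · -- inactive block
      have hz := hinactive u hlt
      have hS0 : (∑ k ∈ I u, ω k * ‖xstar k‖ ^ 2) = 0 := by
        apply Finset.sum_eq_zero
        intro k hk
        rw [hz k hk]
        simp
      rw [hS0, Real.sqrt_zero, mul_zero, zero_add]
      have hip : ∑ k ∈ I u, ((starRingEnd ℂ) (y k - xstar k) * (x k - xstar k)).re
          = ∑ k ∈ I u, ω k * ((starRingEnd ℂ) (y k / ((ω k : ℝ) : ℂ)) * x k).re := by
        apply Finset.sum_congr rfl
        intro k hk
        rw [hz k hk, sub_zero, sub_zero]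
        have hωk : ((ω k : ℝ) : ℂ) ≠ 0 :=
          Complex.ofReal_ne_zero.mpr (ne_of_gt (hω k))
        have hy : (starRingEnd ℂ) (y k)
            = ((ω k : ℝ) : ℂ) * (starRingEnd ℂ) (y k / ((ω k : ℝ) : ℂ)) := by
          rw [map_div₀, Complex.conj_ofReal, mul_div_assoc', mul_comm,
            mul_div_assoc, div_self hωk, mul_one]
        rw [hy, mul_assoc, Complex.re_ofReal_mul]
      rw [hip]
      calc ∑ k ∈ I u, ω k * ((starRingEnd ℂ) (y k / ((ω k : ℝ) : ℂ)) * x k).re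
          ≤ Real.sqrt (∑ k ∈ I u, ω k * ‖y k / ((ω k : ℝ) : ℂ)‖ ^ 2) *
              Real.sqrt (∑ k ∈ I u, ω k * ‖x k‖ ^ 2) :=
            gl_cauchy_schwarz (I u) ω (fun k _ => (hω k).le) _ x
        _ ≤ lam * Real.sqrt (∑ k ∈ I u, ω k * ‖x k‖ ^ 2) :=
            mul_le_mul_of_nonneg_right hlt.le (Real.sqrt_nonneg _)
  -- pointwise quadratic expansion
  have hquad : ∀ k : κ, ‖xstar k - y k‖ ^ 2
      - ((starRingEnd ℂ) (y k - xstar k) * (x k - xstar k)).re * 2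
      ≤ ‖x k - y k‖ ^ 2 := by
    intro k
    have hdec : x k - y k = (xstar k - y k) + (x k - xstar k) := by ring
    rw [hdec, Complex.sq_norm (xstar k - y k + (x k - xstar k)), Complex.normSq_add]
    have h1 : ((xstar k - y k) * (starRingEnd ℂ) (x k - xstar k)).re
        = -(((starRingEnd ℂ) (y k - xstar k)) * (x k - xstar k)).re := by
      have hsw : xstar k - y k = -(y k - xstar k) := by ring
      rw [hsw, neg_mul, Complex.neg_re, gl_re_swap]
    rw [h1, ← Complex.sq_norm (xstar k - y k)]
    have h2 : 0 ≤ Complex.normSq (x k - xstar k) := Complex.normSq_nonneg _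
    linarith
  -- assemble
  have A : ∑ k, ‖xstar k - y k‖ ^ 2
      - (∑ k, ((starRingEnd ℂ) (y k - xstar k) * (x k - xstar k)).re) * 2
      ≤ ∑ k, ‖x k - y k‖ ^ 2 := by
    have := Finset.sum_le_sum (fun k (_ : k ∈ (Finset.univ : Finset κ)) => hquad k)
    rw [Finset.sum_sub_distrib, ← Finset.sum_mul] at this
    exact this
  have B : lam * ∑ u : U, Real.sqrt (∑ k ∈ I u, ω k * ‖xstar k‖ ^ 2)
      + ∑ k, ((starRingEnd ℂ) (y k - xstar k) * (x k - xstar k)).re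
      ≤ lam * ∑ u : U, Real.sqrt (∑ k ∈ I u, ω k * ‖x k‖ ^ 2) := by
    have hsum := Finset.sum_le_sum (fun u (_ : u ∈ (Finset.univ : Finset U)) => key u)
    rw [Finset.sum_add_distrib, ← Finset.mul_sum, ← Finset.mul_sum,
      ← hpart (fun k => ((starRingEnd ℂ) (y k - xstar k) * (x k - xstar k)).re)] at hsum
    exact hsum
  linarith
end

section
/- Let d ∈ ℕ, let v ⊆ {1,…,d}, and for every i ∈ v let g_i : [0,1] → ℂ be integrable with mean c_i := ∫_0^1 g_i(t) dt. Define f : [0,1]^d → ℂ by f(x) = ∏_{i∈v} g_i(x_i), and define the ANOVA terms recursively by f_u := P_u f − Σ_{w⊊u} f_w. Then f_u(x) = ( ∏_{i∈u} (g_i(x_i) − c_i) ) · ( ∏_{i∈v∖u} c_i ) whenever u ⊆ v, and f_u = 0 (identically) whenever u ⊄ v. -/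
open MeasureTheory

/-- The unit cube `[0,1]^d`. -/
def unitCube (d : ℕ) : Set (Fin d → ℝ) := Set.univ.pi fun _ => Set.Icc 0 1

/-- Lebesgue measure restricted to the unit cube `[0,1]^d` (a probability measure). -/
noncomputable def cubeMeasure (d : ℕ) : Measure (Fin d → ℝ) :=
  volume.restrict (unitCube d)

/-- The integral projection `P_u f`: integrate out the variables indexed by the
complement `u^c = {1,…,d} ∖ u`, keeping the variables `x_j`, `j ∈ u`, fixed. -/
noncomputable def integralProjection {d : ℕ} (u : Finset (Fin d))
    (f : (Fin d → ℝ) → ℂ) (x : Fin d → ℝ) : ℂ :=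
  ∫ y, f (fun j => if j ∈ u then x j else y j) ∂(cubeMeasure d)

/-- The ANOVA terms, defined recursively by `f_u = P_u f - Σ_{w ⊊ u} f_w`. -/
noncomputable def anovaTerm {d : ℕ} (f : (Fin d → ℝ) → ℂ) :
    Finset (Fin d) → (Fin d → ℝ) → ℂ
  | u => fun x =>
      integralProjection u f x
        - ∑ w ∈ (u.powerset.erase u).attach, anovaTerm f w.1 x
  termination_by u => u.card
  decreasing_by
    have hw := w.2
    rw [Finset.mem_erase, Finset.mem_powerset] at hw
    exact Finset.card_lt_card (ssubset_of_subset_of_ne hw.2 hw.1)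

-- type synonym for [0,1]-restricted real line
def I01 : Type := ℝ

noncomputable instance : MeasureSpace I01 :=
  { toMeasurableSpace := inferInstanceAs (MeasurableSpace ℝ)
    volume := (volume : Measure ℝ).restrict (Set.Icc 0 1) }

instance : SigmaFinite (volume : Measure I01) :=
  inferInstanceAs (SigmaFinite ((volume : Measure ℝ).restrict (Set.Icc 0 1)))

lemma cubeMeasure_pi (d : ℕ) :
    cubeMeasure d = Measure.pi (fun _ : Fin d => (volume : Measure ℝ).restrict (Set.Icc 0 1)) := by
  rw [cubeMeasure, unitCube]
  refine (Measure.pi_eq (fun s hs => ?_)).symm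
  rw [Measure.restrict_apply (MeasurableSet.univ_pi hs), ← Set.pi_inter_distrib,
    volume_pi_pi]
  exact Finset.prod_congr rfl fun i _ => (Measure.restrict_apply (hs i)).symm

lemma fubini_cube (d : ℕ) (f : Fin d → ℝ → ℂ) :
    ∫ y, ∏ i, f i (y i)
        ∂(Measure.pi fun _ : Fin d => (volume : Measure ℝ).restrict (Set.Icc 0 1))
      = ∏ i, ∫ t in Set.Icc (0:ℝ) 1, f i t := by
  have h := MeasureTheory.integral_fintype_prod_eq_prod (𝕜 := ℂ) (ι := Fin d)
    (E := fun _ => I01) f (μ := fun _ => (volume : Measure I01))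
  exact h

example (d : ℕ) (v : Finset (Fin d)) (g : Fin d → ℝ → ℂ) (u : Finset (Fin d)) (x : Fin d → ℝ) :
    integralProjection u (fun z => ∏ i ∈ v, g i (z i)) x
      = (∏ i ∈ v ∩ u, g i (x i)) * ∏ i ∈ v \ u, ∫ t in Set.Icc (0:ℝ) 1, g i t := by
  rw [integralProjection, cubeMeasure_pi]
  have h1 : ∀ y : Fin d → ℝ, (∏ i ∈ v, g i (if i ∈ u then x i else y i))
      = ∏ i : Fin d, (if i ∈ v then (if i ∈ u then g i (x i) else g i (y i)) else 1) := by
    intro y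
    rw [Finset.prod_ite_mem Finset.univ v
      (fun i => if i ∈ u then g i (x i) else g i (y i)), Finset.univ_inter]
    exact Finset.prod_congr rfl fun i hi => by by_cases h : i ∈ u <;> simp [h]
  simp_rw [h1]
  rw [fubini_cube d (fun i t => if i ∈ v then (if i ∈ u then g i (x i) else g i t) else 1)]
  have h2 : ∀ i : Fin d,
      (∫ t in Set.Icc (0:ℝ) 1, if i ∈ v then (if i ∈ u then g i (x i) else g i t) else 1)
        = if i ∈ v then (if i ∈ u then g i (x i) else ∫ t in Set.Icc (0:ℝ) 1, g i t) else 1 := by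
    intro i
    by_cases hv : i ∈ v <;> by_cases hu : i ∈ u <;>
      simp [hv, hu, Real.volume_Icc]
  simp_rw [h2]
  rw [Finset.prod_ite_mem Finset.univ v
      (fun i => if i ∈ u then g i (x i) else ∫ t in Set.Icc (0:ℝ) 1, g i t), Finset.univ_inter,
    Finset.prod_ite, Finset.filter_mem_eq_inter, ← Finset.sdiff_eq_filter]

lemma proj_prod {d : ℕ} (v : Finset (Fin d)) (g : Fin d → ℝ → ℂ) (u : Finset (Fin d))
    (x : Fin d → ℝ) :
    integralProjection u (fun z => ∏ i ∈ v, g i (z i)) x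
      = (∏ i ∈ v ∩ u, g i (x i)) * ∏ i ∈ v \ u, ∫ t in Set.Icc (0:ℝ) 1, g i t := by
  rw [integralProjection, cubeMeasure_pi]
  have h1 : ∀ y : Fin d → ℝ, (∏ i ∈ v, g i (if i ∈ u then x i else y i))
      = ∏ i : Fin d, (if i ∈ v then (if i ∈ u then g i (x i) else g i (y i)) else 1) := by
    intro y
    rw [Finset.prod_ite_mem Finset.univ v
      (fun i => if i ∈ u then g i (x i) else g i (y i)), Finset.univ_inter]
    exact Finset.prod_congr rfl fun i hi => by by_cases h : i ∈ u <;> simp [h]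
  simp_rw [h1]
  rw [fubini_cube d (fun i t => if i ∈ v then (if i ∈ u then g i (x i) else g i t) else 1)]
  have h2 : ∀ i : Fin d,
      (∫ t in Set.Icc (0:ℝ) 1, if i ∈ v then (if i ∈ u then g i (x i) else g i t) else 1)
        = if i ∈ v then (if i ∈ u then g i (x i) else ∫ t in Set.Icc (0:ℝ) 1, g i t) else 1 := by
    intro i
    by_cases hv : i ∈ v <;> by_cases hu : i ∈ u <;>
      simp [hv, hu, Real.volume_Icc]
  simp_rw [h2]
  rw [Finset.prod_ite_mem Finset.univ v
      (fun i => if i ∈ u then g i (x i) else ∫ t in Set.Icc (0:ℝ) 1, g i t), Finset.univ_inter,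
    Finset.prod_ite, Finset.filter_mem_eq_inter, ← Finset.sdiff_eq_filter]

/-- For a product function `f(x) = ∏_{i∈v} g_i(x_i)` with means
`c_i = ∫₀¹ g_i(t) dt`, the ANOVA terms are
`f_u(x) = (∏_{i∈u} (g_i(x_i) - c_i)) · (∏_{i∈v∖u} c_i)` for `u ⊆ v`, and
`f_u ≡ 0` for `u ⊄ v`. -/
theorem anovaTerm_product (d : ℕ) (v : Finset (Fin d)) (g : Fin d → ℝ → ℂ)
    (hg : ∀ i ∈ v, IntegrableOn (g i) (Set.Icc 0 1) volume)
    (u : Finset (Fin d)) (x : Fin d → ℝ) :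
    (u ⊆ v →
      anovaTerm (fun z => ∏ i ∈ v, g i (z i)) u x
        = (∏ i ∈ u, (g i (x i) - ∫ t in Set.Icc (0:ℝ) 1, g i t))
            * ∏ i ∈ v \ u, ∫ t in Set.Icc (0:ℝ) 1, g i t)
    ∧ (¬ u ⊆ v → anovaTerm (fun z => ∏ i ∈ v, g i (z i)) u x = 0) := by
  set c : Fin d → ℂ := fun i => ∫ t in Set.Icc (0:ℝ) 1, g i t with hc
  set f : (Fin d → ℝ) → ℂ := fun z => ∏ i ∈ v, g i (z i) with hf
  induction u using Finset.strongInduction with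
  | _ u ih =>
    have hunf : anovaTerm f u x = integralProjection u f x
        - ∑ w ∈ u.powerset.erase u, anovaTerm f w x := by
      rw [anovaTerm]
      beta_reduce
      rw [Finset.sum_attach (u.powerset.erase u) (fun w => anovaTerm f w x)]
    constructor
    · intro huv
      have hsum : ∑ w ∈ u.powerset.erase u, anovaTerm f w x
          = (∑ w ∈ u.powerset.erase u,
              (∏ i ∈ w, (g i (x i) - c i)) * ∏ i ∈ u \ w, c i) * ∏ i ∈ v \ u, c i := by
        rw [Finset.sum_mul]
        refine Finset.sum_congr rfl fun w hw => ?_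
        rw [Finset.mem_erase, Finset.mem_powerset] at hw
        have hwu : w ⊂ u := ssubset_of_subset_of_ne hw.2 hw.1
        rw [(ih w hwu).1 (hw.2.trans huv)]
        have : v \ w = v \ u ∪ u \ w := (Finset.sdiff_union_sdiff_cancel huv hw.2).symm
        rw [this, Finset.prod_union (Finset.sdiff_disjoint.mono_right Finset.sdiff_subset)]
        ring
      have hbin : ∏ i ∈ u, g i (x i)
          = ∑ w ∈ u.powerset, (∏ i ∈ w, (g i (x i) - c i)) * ∏ i ∈ u \ w, c i := by
        have := Finset.prod_add (fun i => g i (x i) - c i) c u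
        simpa using this
      have hsplit : (∑ w ∈ u.powerset.erase u,
            (∏ i ∈ w, (g i (x i) - c i)) * ∏ i ∈ u \ w, c i)
          = ∏ i ∈ u, g i (x i) - ∏ i ∈ u, (g i (x i) - c i) := by
        have h := Finset.sum_erase_add u.powerset
          (fun w => (∏ i ∈ w, (g i (x i) - c i)) * ∏ i ∈ u \ w, c i)
          (Finset.mem_powerset_self u)
        rw [← hbin] at h
        have h2 : (∏ i ∈ u, (g i (x i) - c i)) * ∏ i ∈ u \ u, c i
            = ∏ i ∈ u, (g i (x i) - c i) := by
          rw [Finset.sdiff_self, Finset.prod_empty, mul_one]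
        linear_combination h - h2
      rw [hunf, hsum, hsplit, proj_prod v g u x, Finset.inter_eq_right.mpr huv]
      ring
    · intro huv
      set s : Finset (Fin d) := v ∩ u with hs
      have hsum : ∑ w ∈ u.powerset.erase u, anovaTerm f w x
          = ∑ w ∈ s.powerset, (∏ i ∈ w, (g i (x i) - c i)) * ∏ i ∈ v \ w, c i := by
        have key : ∀ w ∈ u.powerset.erase u, anovaTerm f w x
            = if w ⊆ v then (∏ i ∈ w, (g i (x i) - c i)) * ∏ i ∈ v \ w, c i else 0 := by
          intro w hw
          rw [Finset.mem_erase, Finset.mem_powerset] at hw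
          have hwu : w ⊂ u := ssubset_of_subset_of_ne hw.2 hw.1
          by_cases h : w ⊆ v
          · rw [if_pos h, (ih w hwu).1 h]
          · rw [if_neg h, (ih w hwu).2 h]
        rw [Finset.sum_congr rfl key, ← Finset.sum_filter]
        congr 1
        ext w
        simp only [Finset.mem_filter, Finset.mem_erase, Finset.mem_powerset, hs,
          Finset.subset_inter_iff]
        constructor
        · rintro ⟨⟨hne, hwu⟩, hwv⟩; exact ⟨hwv, hwu⟩
        · rintro ⟨hwv, hwu⟩
          refine ⟨⟨?_, hwu⟩, hwv⟩
          rintro rfl; exact huv hwv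
      have hsv : s ⊆ v := Finset.inter_subset_left
      have hsum2 : ∑ w ∈ s.powerset, (∏ i ∈ w, (g i (x i) - c i)) * ∏ i ∈ v \ w, c i
          = (∏ i ∈ s, g i (x i)) * ∏ i ∈ v \ s, c i := by
        have hbin : ∏ i ∈ s, g i (x i)
            = ∑ w ∈ s.powerset, (∏ i ∈ w, (g i (x i) - c i)) * ∏ i ∈ s \ w, c i := by
          have := Finset.prod_add (fun i => g i (x i) - c i) c s
          simpa using this
        rw [hbin, Finset.sum_mul]
        refine Finset.sum_congr rfl fun w hw => ?_
        rw [Finset.mem_powerset] at hw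
        have : v \ w = v \ s ∪ s \ w := (Finset.sdiff_union_sdiff_cancel hsv hw).symm
        rw [this, Finset.prod_union (Finset.sdiff_disjoint.mono_right Finset.sdiff_subset)]
        ring
      have hvu : v \ s = v \ u := by rw [hs]; exact Finset.sdiff_inter_self_left v u
      rw [hunf, hsum, hsum2, proj_prod v g u x, hvu]
      ring
end
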